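/- Let à be an arbitrary closed extension A_min ⊂ à ⊂ A_max corresponding to T : V → W. Then for each λ ∈ ρ(Ã), the formula M_Ã(λ) = pr_ζ (I − (à − λ)^{-1}(A_max − λ)) A_β^{-1} i_{W→H} defines a bounded operator W → V, depending holomorphically on λ ∈ ρ(Ã), which satisfies M_Ã(λ)((A z^λ)_W − T pr_ζ z^λ) = pr_ζ z^λ for all z^λ ∈ Z_λ with pr_ζ z^λ ∈ D(T). Moreover, for λ ∈ ρ(Ã) ∩ ρ(A_β), −M_Ã(λ) is the inverse of T + G^λ_{V,W} : D(T) → W. -/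

import Mathlib

set_option maxHeartbeats 2000000


open scoped InnerProductSpace

/-- **Theorem 2.12.** Let `Ã` be an arbitrary closed extension
`A_min ⊂ Ã ⊂ A_max` corresponding to `T : V → W`.  For each `λ ∈ ρ(Ã)` the formula
`M_Ã(λ) = pr_ζ (I − (Ã − λ)⁻¹(A_max − λ)) A_β⁻¹ i_{W→H}` defines a bounded operator
`W → V`, depending holomorphically on `λ ∈ ρ(Ã)`, which satisfies
`M_Ã(λ)((A z^λ)_W − T pr_ζ z^λ) = pr_ζ z^λ` for all `z^λ ∈ Z_λ` with `pr_ζ z^λ ∈ D(T)`.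
Moreover, for `λ ∈ ρ(Ã) ∩ ρ(A_β)`, `−M_Ã(λ)` is the inverse of
`T + G^λ_{V,W} : D(T) → W`.  Here `ρ(Ã)` is represented by an open set `U` carrying a
resolvent family `R`, and `ρ(A_β)` by a set `Uβ` carrying a resolvent family `Rβ`. -/
theorem stmt_15
    {H : Type*} [NormedAddCommGroup H] [InnerProductSpace ℂ H] [CompleteSpace H]
    (D D' Dβ DAt : Submodule ℂ H) (hβD : Dβ ≤ D) (hAtD : DAt ≤ D)
    (A : D →ₗ[ℂ] H) (A' : D' →ₗ[ℂ] H)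
    -- 0 ∈ ρ(A_β)
    (Aβinv : H →L[ℂ] H)
    (h0ran : ∀ f : H, Aβinv f ∈ Dβ)
    (h0left : ∀ u : D, (u : H) ∈ Dβ → Aβinv (A u) = (u : H))
    (h0right : ∀ f : H, A ⟨Aβinv f, hβD (h0ran f)⟩ = f)
    -- PZ' : orthogonal projection onto Z′ = ker A_max′
    (PZ' : H →L[ℂ] H)
    (hPZ'mem : ∀ x : H, ∃ h : PZ' x ∈ D', A' ⟨PZ' x, h⟩ = 0)
    (hPZ'fix : ∀ z : D', A' z = 0 → PZ' z = (z : H))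
    (hPZ'orth : ∀ x : H, ∀ z : D', A' z = 0 → ⟪x - PZ' x, (z : H)⟫_ℂ = 0)
    -- V ⊂ Z and W ⊂ Z′ closed subspaces, PW the orthogonal projection onto W
    (V W : Submodule ℂ H)
    (hVZ : V ≤ (LinearMap.ker A).map D.subtype)
    (hWZ' : W ≤ (LinearMap.ker A').map D'.subtype)
    (hVclosed : IsClosed (V : Set H)) (hWclosed : IsClosed (W : Set H))
    (PW : H →L[ℂ] H)
    (hPWmem : ∀ x : H, PW x ∈ W)
    (hPWfix : ∀ w ∈ W, PW w = w)
    (hPWorth : ∀ x : H, ∀ w ∈ W, ⟪x - PW x, w⟫_ℂ = 0)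
    -- T : V → W, the operator associated with Ã by Theorem 2.1
    (T : H →ₗ.[ℂ] H)
    (hTdomV : T.domain ≤ V)
    (hV : V = T.domain.topologicalClosure)
    (hTran : ∀ x : T.domain, T x ∈ W)
    (hTdom : ∀ x : H, x ∈ T.domain ↔
      ∃ u : D, (u : H) ∈ DAt ∧ (u : H) - Aβinv (A u) = x)
    (hTval : ∀ (u : D), (u : H) ∈ DAt →
      ∀ hx : ((u : H) - Aβinv (A u)) ∈ T.domain,
        T ⟨(u : H) - Aβinv (A u), hx⟩ = PW (A u))
    (hchar : ∀ u : D, (u : H) ∈ DAt ↔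
      ∃ hx : ((u : H) - Aβinv (A u)) ∈ T.domain,
        PW (A u) = T ⟨(u : H) - Aβinv (A u), hx⟩)
    -- U ⊆ ρ(Ã): open set with bounded resolvent family R ν = (Ã − ν)⁻¹
    (U : Set ℂ) (hUopen : IsOpen U)
    (R : ℂ → H →L[ℂ] H)
    (hRD : ∀ (ν : ℂ) (f : H), R ν f ∈ D)
    (hRAt : ∀ ν ∈ U, ∀ f : H, R ν f ∈ DAt)
    (hRleft : ∀ ν ∈ U, ∀ u : D, (u : H) ∈ DAt → R ν (A u - ν • (u : H)) = (u : H))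
    (hRright : ∀ ν ∈ U, ∀ f : H, A ⟨R ν f, hRD ν f⟩ - ν • R ν f = f)
    -- Uβ ⊆ ρ(A_β): set with bounded resolvent family Rβ ν = (A_β − ν)⁻¹
    (Uβ : Set ℂ)
    (Rβ : ℂ → H →L[ℂ] H)
    (hRβD : ∀ (ν : ℂ) (f : H), Rβ ν f ∈ Dβ)
    (hRβleft : ∀ ν ∈ Uβ, ∀ u : D, (u : H) ∈ Dβ → Rβ ν (A u - ν • (u : H)) = (u : H))
    (hRβright : ∀ ν ∈ Uβ, ∀ f : H,
      A ⟨Rβ ν f, hβD (hRβD ν f)⟩ - ν • Rβ ν f = f) :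
    -- M_Ã(ν) f = pr_ζ ((I − (Ã − ν)⁻¹(A_max − ν)) A_β⁻¹ f), for f ∈ W
    let v : H → D := fun f => ⟨Aβinv f, hβD (h0ran f)⟩
    let x : ℂ → H → D := fun ν f =>
      v f - ⟨R ν (A (v f) - ν • ((v f : D) : H)), hRD ν (A (v f) - ν • ((v f : D) : H))⟩
    let M : ℂ → H → H := fun ν f => ((x ν f : D) : H) - Aβinv (A (x ν f))
    -- M_Ã(ν) is a bounded operator from W to V
    (∀ ν ∈ U, ∀ f ∈ W, M ν f ∈ V) ∧
    (∀ ν ∈ U, Continuous fun f : W => M ν (f : H)) ∧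
    -- holomorphic dependence on ν ∈ ρ(Ã)
    (∀ f ∈ W, DifferentiableOn ℂ (fun ν => M ν f) U) ∧
    -- the defining relation (2.36): M_Ã(ν)((A z)_W − T pr_ζ z) = pr_ζ z for z ∈ Z_ν
    (∀ ν ∈ U, ∀ z : D, A z = ν • (z : H) →
      ∀ hb : ((z : H) - Aβinv (A z)) ∈ T.domain,
        M ν (PW (A z) - T ⟨(z : H) - Aβinv (A z), hb⟩) = (z : H) - Aβinv (A z)) ∧
    -- for ν ∈ ρ(Ã) ∩ ρ(A_β), −M_Ã(ν) is the inverse of T + G^ν_{V,W} : D(T) → W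
    (∀ ν ∈ U ∩ Uβ,
      (∀ y : T.domain,
        M ν (T y + PW (-(ν • PZ' ((y : H) + ν • Rβ ν (y : H))))) = -((y : H))) ∧
      (∀ f ∈ W, ∃ hb : (-(M ν f)) ∈ T.domain,
        T ⟨-(M ν f), hb⟩ + PW (-(ν • PZ' ((-(M ν f)) + ν • Rβ ν (-(M ν f))))) = f)) := by

  intro v x M
  -- basic facts
  have hζ0 : ∀ u : D, (u : H) ∈ Dβ → (u : H) - Aβinv (A u) = 0 := by
    intro u hu; rw [h0left u hu, sub_self]
  have hvA : ∀ f : H, A (v f) = f := h0right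
  have hMsub : ∀ (ν : ℂ) (f : H) (r : D), x ν f = v f - r →
      M ν f = -(((r : D) : H) - Aβinv (A r)) := by
    intro ν f r hr
    have h0 : ((v f : D) : H) - Aβinv (A (v f)) = 0 := hζ0 (v f) (h0ran f)
    show ((x ν f : D) : H) - Aβinv (A (x ν f)) = _
    rw [hr, map_sub]
    have hc : ((v f - r : D) : H) = ((v f : D) : H) - (r : H) := rfl
    rw [hc, map_sub]
    rw [sub_eq_zero] at h0
    rw [← h0]
    abel
  have hrmem : ∀ (ν : ℂ) (f : H),
      x ν f = v f - ⟨R ν (A (v f) - ν • ((v f : D) : H)),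
        hRD ν (A (v f) - ν • ((v f : D) : H))⟩ := fun ν f => rfl
  have hgt : ∀ (ν : ℂ) (f : H), A (v f) - ν • ((v f : D) : H) = f - ν • Aβinv f := by
    intro ν f; rw [hvA]
  have hxco : ∀ (ν : ℂ) (f : H), ((x ν f : D) : H) = Aβinv f - R ν (f - ν • Aβinv f) := by
    intro ν f
    have : ((x ν f : D) : H)
        = ((v f : D) : H) - R ν (A (v f) - ν • ((v f : D) : H)) := rfl
    rw [this, hgt]
  have hAx : ∀ ν ∈ U, ∀ f : H, A (x ν f) = ν • ((x ν f : D) : H) := by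
    intro ν hν f
    set g := A (v f) - ν • ((v f : D) : H) with hgdef
    have h1 := hRright ν hν g
    have h2 : A (⟨R ν g, hRD ν g⟩ : D) = g + ν • R ν g :=
      eq_add_of_sub_eq h1
    have h3 : A (x ν f) = A (v f) - A (⟨R ν g, hRD ν g⟩ : D) := by
      rw [hrmem ν f, map_sub]
    rw [h3, h2, hgdef]
    have h4 : ((x ν f : D) : H) = ((v f : D) : H) - R ν g := rfl
    rw [h4]
    rw [smul_sub]
    abel
  -- membership of M ν f in the domain of T
  have hMdom : ∀ ν ∈ U, ∀ f : H, M ν f ∈ T.domain := by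
    intro ν hν f
    set g := A (v f) - ν • ((v f : D) : H) with hgdef
    have h1 : M ν f = -(((⟨R ν g, hRD ν g⟩ : D) : H) - Aβinv (A (⟨R ν g, hRD ν g⟩ : D))) :=
      hMsub ν f _ (hrmem ν f)
    rw [h1]
    exact neg_mem ((hTdom _).mpr ⟨⟨R ν g, hRD ν g⟩, hRAt ν hν g, rfl⟩)
  -- uniqueness lemma: x ν f is determined by c ∈ DAt solving (A - ν) c = (A - ν) v f
  have hxeq : ∀ ν ∈ U, ∀ (f : H) (c : D), ((c : D) : H) ∈ DAt →
      A c - ν • ((c : D) : H) = A (v f) - ν • ((v f : D) : H) → x ν f = v f - c := by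
    intro ν hν f c hcAt harg
    have h1 : R ν (A (v f) - ν • ((v f : D) : H)) = (c : H) := by
      rw [← harg]; exact hRleft ν hν c hcAt
    rw [hrmem ν f]
    congr 1
    exact Subtype.ext h1
  -- orthogonal projection facts
  have hPW0 : ∀ ξ : H, (∀ w ∈ W, ⟪ξ, w⟫_ℂ = 0) → PW ξ = 0 := by
    intro ξ hξ
    have h1 := hPWorth ξ (PW ξ) (hPWmem ξ)
    rw [inner_sub_left, hξ (PW ξ) (hPWmem ξ), zero_sub, neg_eq_zero] at h1
    exact inner_self_eq_zero.mp h1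
  have hPWPZ : ∀ ξ : H, PW (PZ' ξ) = PW ξ := by
    intro ξ
    have h1 : PW (ξ - PZ' ξ) = 0 := by
      apply hPW0
      intro w hw
      obtain ⟨z', hz'ker, hz'eq⟩ := hWZ' hw
      rw [← hz'eq]
      exact hPZ'orth ξ z' (LinearMap.mem_ker.mp hz'ker)
    rw [map_sub, sub_eq_zero] at h1
    exact h1.symm
  -- elements of T.domain come from the kernel of A
  have hdomD : ∀ y : H, y ∈ T.domain → ∃ yD : D, A yD = 0 ∧ ((yD : D) : H) = y := by
    intro y hy
    obtain ⟨yD, h1, h2⟩ := hVZ (hTdomV hy)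
    exact ⟨yD, LinearMap.mem_ker.mp h1, h2⟩
  -- construction of the eigen-lift e = y + ν (A_β - ν)⁻¹ y
  have hE : ∀ ν ∈ Uβ, ∀ yD : D, A yD = 0 →
      ∃ eD : D, ((eD : D) : H) = ((yD : D) : H) + ν • Rβ ν ((yD : D) : H) ∧
        A eD = ν • ((eD : D) : H) ∧
        ((eD : D) : H) - Aβinv (A eD) = ((yD : D) : H) := by
    intro ν hνβ yD hyD0
    set y : H := ((yD : D) : H) with hydef
    have hArβ : A (⟨Rβ ν y, hβD (hRβD ν y)⟩ : D) = y + ν • Rβ ν y :=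
      eq_add_of_sub_eq (hRβright ν hνβ y)
    refine ⟨yD + ν • ⟨Rβ ν y, hβD (hRβD ν y)⟩, rfl, ?_, ?_⟩
    · rw [map_add, map_smul, hyD0, hArβ]
      have hc : (((yD + ν • ⟨Rβ ν y, hβD (hRβD ν y)⟩ : D) : D) : H)
          = y + ν • Rβ ν y := rfl
      rw [hc, zero_add, smul_add, smul_smul]
    · have hc : (((yD + ν • ⟨Rβ ν y, hβD (hRβD ν y)⟩ : D) : D) : H)
          = y + ν • Rβ ν y := rfl
      rw [map_add, map_smul, hyD0, hArβ, hc, zero_add, map_smul]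
      have h2 : Aβinv (y + ν • Rβ ν y) = Rβ ν y := by
        rw [← hArβ]
        exact h0left _ (hRβD ν y)
      rw [h2]; abel
  -- injectivity on eigenvectors with trivial boundary part, for ν ∈ ρ(A_β)
  have hinj : ∀ ν ∈ Uβ, ∀ d : D, A d = ν • ((d : D) : H) →
      ((d : D) : H) - Aβinv (A d) = 0 → ((d : D) : H) = 0 := by
    intro ν hνβ d hAd hpr
    rw [sub_eq_zero] at hpr
    have hdβ : ((d : D) : H) ∈ Dβ := by rw [hpr]; exact h0ran _
    have h1 := hRβleft ν hνβ d hdβ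
    rw [hAd, sub_self, map_zero] at h1
    exact h1.symm
  -- the key defining relation (part 4)
  have key4 : ∀ ν ∈ U, ∀ z : D, A z = ν • (z : H) →
      ∀ hb : ((z : H) - Aβinv (A z)) ∈ T.domain,
        M ν (PW (A z) - T ⟨(z : H) - Aβinv (A z), hb⟩) = (z : H) - Aβinv (A z) := by
    intro ν hν z hz hb
    set f : H := PW (A z) - T ⟨(z : H) - Aβinv (A z), hb⟩ with hf
    have hfW : f ∈ W := W.sub_mem (hPWmem _) (hTran _)
    set c : D := v f - z with hcdef
    have hcco : ((c : D) : H) = Aβinv f - (z : H) := rfl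
    have hAc : A c = f - ν • (z : H) := by
      rw [hcdef, map_sub, hvA, hz]
    have hcpr : ((c : D) : H) - Aβinv (A c) = -((z : H) - Aβinv (A z)) := by
      rw [hcco, hAc, hz]
      rw [map_sub Aβinv f (ν • (z : H)), map_smul Aβinv ν ((z : H) : H)]
      abel
    have hcdom : ((c : D) : H) - Aβinv (A c) ∈ T.domain := by
      rw [hcpr]; exact neg_mem hb
    have hTc : T ⟨((c : D) : H) - Aβinv (A c), hcdom⟩
        = -(T ⟨(z : H) - Aβinv (A z), hb⟩) := by
      have he : (⟨((c : D) : H) - Aβinv (A c), hcdom⟩ : T.domain)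
          = -(⟨(z : H) - Aβinv (A z), hb⟩ : T.domain) := by
        apply Subtype.ext
        show ((c : D) : H) - Aβinv (A c) = -((z : H) - Aβinv (A z))
        exact hcpr
      rw [he, T.map_neg]
    have hcAt : ((c : D) : H) ∈ DAt := by
      apply (hchar c).mpr
      refine ⟨hcdom, ?_⟩
      rw [hTc, hAc, map_sub PW f (ν • (z : H)), hPWfix f hfW, hf, ← hz]
      abel
    have harg : A c - ν • ((c : D) : H) = A (v f) - ν • ((v f : D) : H) := by
      rw [hAc, hcco, hvA]
      have : ((v f : D) : H) = Aβinv f := rfl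
      rw [this, smul_sub]
      abel
    have hx1 : x ν f = v f - c := hxeq ν hν f c hcAt harg
    have hx2 : x ν f = z := by rw [hx1, hcdef, sub_sub_cancel]
    show ((x ν f : D) : H) - Aβinv (A (x ν f)) = (z : H) - Aβinv (A z)
    rw [hx2]
  refine ⟨?_, ?_, ?_, key4, ?_⟩
  · -- part 1: M ν f ∈ V
    intro ν hν f _
    exact hTdomV (hMdom ν hν f)
  · -- part 2: continuity
    intro ν hν
    have hform : ∀ f : H, M ν f = (Aβinv f - R ν (f - ν • Aβinv f))
        - ν • Aβinv (Aβinv f - R ν (f - ν • Aβinv f)) := by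
      intro f
      show ((x ν f : D) : H) - Aβinv (A (x ν f)) = _
      rw [hAx ν hν f, map_smul, hxco]
    have hcont : Continuous fun h : H => (Aβinv h - R ν (h - ν • Aβinv h))
        - ν • Aβinv (Aβinv h - R ν (h - ν • Aβinv h)) := by fun_prop
    exact (hcont.comp continuous_subtype_val).congr fun f => (hform (f : H)).symm
  · -- part 3: holomorphy
    intro f _
    have hRdiff : DifferentiableOn ℂ R U := by
      intro μ hμ
      have hres : ∀ ν ∈ U, (1 - (ν - μ) • R μ) * R ν = R μ := by
        intro ν hν
        ext fz
        have h1 := hRright ν hν fz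
        have h2 := hRleft μ hμ ⟨R ν fz, hRD ν fz⟩ (hRAt ν hν fz)
        have h3 : A (⟨R ν fz, hRD ν fz⟩ : D) - μ • R ν fz
            = fz + (ν - μ) • R ν fz := by
          rw [eq_add_of_sub_eq h1, sub_smul]; abel
        rw [h3, map_add, map_smul] at h2
        have h2' : R μ fz + (ν - μ) • R μ (R ν fz) = R ν fz := h2
        simp only [ContinuousLinearMap.mul_apply, ContinuousLinearMap.sub_apply,
          ContinuousLinearMap.one_apply, ContinuousLinearMap.smul_apply]
        exact (eq_sub_of_add_eq h2').symm
      have hball : ∀ᶠ ν in nhdsWithin μ U,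
          R ν = Ring.inverse (1 - (ν - μ) • R μ) * R μ := by
        have hb : ∀ᶠ ν in nhds μ, ‖ν - μ‖ * ‖R μ‖ < 1 := by
          have hc : ContinuousAt (fun ν : ℂ => ‖ν - μ‖ * ‖R μ‖) μ := by fun_prop
          have h0 : ‖μ - μ‖ * ‖R μ‖ < 1 := by simp
          exact hc (Iio_mem_nhds h0)
        filter_upwards [nhdsWithin_le_nhds hb, self_mem_nhdsWithin] with ν hb1 hνU
        have hnorm : ‖(ν - μ) • R μ‖ < 1 :=
          lt_of_le_of_lt (norm_smul_le _ _) hb1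
        have hu : IsUnit ((1 : H →L[ℂ] H) - (ν - μ) • R μ) :=
          (Units.oneSub ((ν - μ) • R μ) hnorm).isUnit
        have h2 : Ring.inverse ((1 : H →L[ℂ] H) - (ν - μ) • R μ)
            * ((1 - (ν - μ) • R μ) * R ν) = R ν := by
          rw [← mul_assoc, Ring.inverse_mul_cancel _ hu, one_mul]
        rw [hres ν hνU] at h2
        exact h2.symm
      have hF : DifferentiableAt ℂ
          (fun ν : ℂ => Ring.inverse ((1 : H →L[ℂ] H) - (ν - μ) • R μ) * R μ) μ := by
        apply DifferentiableAt.mul _ (differentiableAt_const _)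
        apply DifferentiableAt.inverse
        · fun_prop
        · simp
      refine (hF.differentiableWithinAt).congr_of_eventuallyEq hball ?_
      simp
    have hφ : DifferentiableOn ℂ (fun ν => Aβinv f - R ν (f - ν • Aβinv f)) U := by
      apply DifferentiableOn.sub (differentiableOn_const _)
      exact hRdiff.clm_apply ((differentiableOn_const _).sub
        (differentiableOn_id.smul (differentiableOn_const _)))
    have hψ : DifferentiableOn ℂ
        (fun ν => (Aβinv f - R ν (f - ν • Aβinv f))
          - ν • Aβinv (Aβinv f - R ν (f - ν • Aβinv f))) U :=
      hφ.sub (differentiableOn_id.smul ((differentiableOn_const Aβinv).clm_apply hφ))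
    apply hψ.congr
    intro ν hν
    show ((x ν f : D) : H) - Aβinv (A (x ν f)) = _
    rw [hAx ν hν f, map_smul, hxco]
  · -- part 5
    intro ν hν
    obtain ⟨hνU, hνβ⟩ := hν
    constructor
    · -- 5a
      intro y
      obtain ⟨yD, hyD0, hyDc⟩ := hdomD (y : H) y.2
      obtain ⟨eD, he1, he2, he3⟩ := hE ν hνβ yD hyD0
      rw [hyDc] at he1 he3
      have hz : A (-eD) = ν • (((-eD : D) : D) : H) := by
        have hc : (((-eD : D) : D) : H) = -((eD : D) : H) := rfl
        rw [map_neg, he2, hc, smul_neg]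
      have hprneg : (((-eD : D) : D) : H) - Aβinv (A (-eD)) = -((y : H)) := by
        have hc : (((-eD : D) : D) : H) = -((eD : D) : H) := rfl
        rw [hc, map_neg A eD, map_neg Aβinv (A eD), ← he3]
        abel
      have hb : (((-eD : D) : D) : H) - Aβinv (A (-eD)) ∈ T.domain := by
        rw [hprneg]; exact neg_mem y.2
      have hk := key4 ν hνU (-eD) hz hb
      have hTneg : T ⟨(((-eD : D) : D) : H) - Aβinv (A (-eD)), hb⟩ = -(T y) := by
        have he : (⟨(((-eD : D) : D) : H) - Aβinv (A (-eD)), hb⟩ : T.domain) = -y := by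
          apply Subtype.ext
          show (((-eD : D) : D) : H) - Aβinv (A (-eD)) = -((y : H))
          exact hprneg
        rw [he, T.map_neg]
      have hargeq : PW (A (-eD)) - T ⟨(((-eD : D) : D) : H) - Aβinv (A (-eD)), hb⟩
          = T y + PW (-(ν • PZ' ((y : H) + ν • Rβ ν (y : H)))) := by
        rw [hTneg, ← he1, map_neg A eD, he2, map_neg PW, map_neg PW,
          map_smul PW ν ((eD : D) : H), map_smul PW ν (PZ' ((eD : D) : H)), hPWPZ]
        abel
      rw [hargeq] at hk
      rw [hk, hprneg]
    · -- 5b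
      intro f hf
      set g := A (v f) - ν • ((v f : D) : H) with hgdef
      set r : D := ⟨R ν g, hRD ν g⟩ with hrdef
      have hrAt : ((r : D) : H) ∈ DAt := hRAt ν hνU g
      have hMf : M ν f = -(((r : D) : H) - Aβinv (A r)) := hMsub ν f r (hrmem ν f)
      set m : H := ((r : D) : H) - Aβinv (A r) with hmdef
      have hmd : m ∈ T.domain := (hTdom m).mpr ⟨r, hrAt, rfl⟩
      have hnegM : -(M ν f) = m := by rw [hMf, neg_neg]
      have hb : -(M ν f) ∈ T.domain := by rw [hnegM]; exact hmd
      refine ⟨hb, ?_⟩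
      -- T term
      have hTterm : T ⟨-(M ν f), hb⟩ = PW (A r) := by
        have he : (⟨-(M ν f), hb⟩ : T.domain) = ⟨m, hmd⟩ := Subtype.ext hnegM
        rw [he]
        exact hTval r hrAt hmd
      -- A r = g + ν • R ν g
      have hAr : A r = f - ν • Aβinv f + ν • R ν g := by
        have h1 := hRright ν hνU g
        have h2 : A r = g + ν • R ν g := eq_add_of_sub_eq h1
        rw [h2, hgdef, hgt]
      have hxc : ((x ν f : D) : H) = Aβinv f - R ν g := by
        rw [hxco, ← hgt ν f, ← hgdef]
      have hPWAr : PW (A r) = f - ν • PW ((x ν f : D) : H) := by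
        have e1 : A r = f - ν • ((x ν f : D) : H) := by
          rw [hAr, hxc, smul_sub]
          abel
        rw [e1, map_sub PW f (ν • ((x ν f : D) : H)),
          map_smul PW ν ((x ν f : D) : H), hPWfix f hf]
      -- the eigen-lift of m equals -(x ν f)
      obtain ⟨mD, hmD0, hmDc⟩ := hdomD m hmd
      obtain ⟨eD, he1, he2, he3⟩ := hE ν hνβ mD hmD0
      rw [hmDc] at he1 he3
      have hd0 : ((eD : D) : H) + ((x ν f : D) : H) = 0 := by
        have hdA : A (eD + x ν f) = ν • (((eD + x ν f : D) : D) : H) := by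
          have hc : (((eD + x ν f : D) : D) : H)
              = ((eD : D) : H) + ((x ν f : D) : H) := rfl
          rw [map_add, he2, hAx ν hνU f, hc, smul_add]
        have hdpr : (((eD + x ν f : D) : D) : H) - Aβinv (A (eD + x ν f)) = 0 := by
          have hc : (((eD + x ν f : D) : D) : H)
              = ((eD : D) : H) + ((x ν f : D) : H) := rfl
          have hMf' : ((x ν f : D) : H) - Aβinv (A (x ν f)) = -m := by
            show M ν f = -m
            rw [hMf, hmdef]
          rw [hc, map_add, map_add]
          calc ((eD : D) : H) + ((x ν f : D) : H) - (Aβinv (A eD) + Aβinv (A (x ν f)))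
              = (((eD : D) : H) - Aβinv (A eD))
                + (((x ν f : D) : H) - Aβinv (A (x ν f))) := by abel
            _ = m + (-m) := by rw [he3, hMf']
            _ = 0 := by abel
        have := hinj ν hνβ (eD + x ν f) hdA hdpr
        rwa [show (((eD + x ν f : D) : D) : H)
            = ((eD : D) : H) + ((x ν f : D) : H) from rfl] at this
      have hGterm : PW (-(ν • PZ' (-(M ν f) + ν • Rβ ν (-(M ν f)))))
          = ν • PW ((x ν f : D) : H) := by
        rw [hnegM, map_neg, map_smul, hPWPZ, ← he1]
        have heq : ((eD : D) : H) = -((x ν f : D) : H) :=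
          eq_neg_of_add_eq_zero_left hd0
        rw [heq, map_neg, smul_neg, neg_neg]
      rw [hTterm, hPWAr, hGterm]
      abel
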